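/- Let (S_{i,j}) be a collection of subsets of {1,…,2n} indexed by pairs (i,j) with 1 ≤ i ≤ j and i+j ≤ 2n, and let V_{i,j} = span{w_l : l ∈ S_{i,j}}. Then the collection (V_{i,j}) is a point of SpR_{2n} if and only if: (a) S_{i,j} ⊆ {1,…,i} ∪ {j+1,…,2n} and |S_{i,j}| = i for all (i,j); (b) S_{i,j} ⊆ S_{i+1,j} whenever (i+1,j) is also an index; (c) S_{i,j} ⊆ S_{i,j+1} ∪ {j+1} whenever (i,j+1) is also an index; (d) for every 1 ≤ i ≤ n, if k ∈ S_{i,2n−i} then 2n+1−k ∉ S_{i,2n−i}. -/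

import Mathlib

noncomputable section

/-- The ambient 2n-dimensional complex vector space `W = ℂ^{2n}`. -/
abbrev Wsp (n : ℕ) := Fin (2*n) → ℂ

/-- The basis vector `w_k` (1-based index `k ∈ {1,…,2n}`). -/
def wvec (n k : ℕ) : Wsp n := fun i => if (i : ℕ) + 1 = k then 1 else 0

/-- The standard symplectic form: `⟨w_i, w_{2n+1-i}⟩ = 1` for `1 ≤ i ≤ n`,
and `⟨w_i, w_j⟩ = 0` for `j ≠ 2n+1-i`. -/
def sform (n : ℕ) (x y : Wsp n) : ℂ :=
  ∑ i : Fin (2*n), (if (i : ℕ) < n then 1 else -1) * x i *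
    y ⟨2*n - 1 - (i : ℕ), by have := i.isLt; omega⟩

/-- A subspace is isotropic if the symplectic form vanishes on it. -/
def IsIsotropic (n : ℕ) (U : Submodule ℂ (Wsp n)) : Prop :=
  ∀ u ∈ U, ∀ v ∈ U, sform n u v = 0

/-- The projection `pr_k` along `w_k` (1-based). -/
def prj (n k : ℕ) : Wsp n →ₗ[ℂ] Wsp n where
  toFun x := fun i => if (i : ℕ) + 1 = k then 0 else x i
  map_add' x y := by funext i; by_cases h : (i : ℕ) + 1 = k <;> simp [h]
  map_smul' c x := by funext i; by_cases h : (i : ℕ) + 1 = k <;> simp [h]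

/-- The subspace `W_{i,j} = span(w_1,…,w_i,w_{j+1},…,w_{2n})` (1-based). -/
def WIJ (n i j : ℕ) : Submodule ℂ (Wsp n) :=
  Submodule.span ℂ (wvec n '' {k | (1 ≤ k ∧ k ≤ i) ∨ (j + 1 ≤ k ∧ k ≤ 2*n)})

/-- Orthogonal complement with respect to the symplectic form. -/
def sperp (n : ℕ) (U : Submodule ℂ (Wsp n)) : Submodule ℂ (Wsp n) where
  carrier := {x | ∀ u ∈ U, sform n x u = 0}
  zero_mem' := by intro u hu; simp [sform]
  add_mem' := by
    intro a b ha hb u hu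
    have ha' := ha u hu
    have hb' := hb u hu
    simp only [sform, Pi.add_apply, add_mul, mul_add, Finset.sum_add_distrib] at *
    rw [ha', hb', add_zero]
  smul_mem' := by
    intro c a ha u hu
    have ha' := ha u hu
    simp only [sform, Pi.smul_apply, smul_eq_mul] at *
    calc ∑ i : Fin (2*n), (if (i : ℕ) < n then 1 else -1) * (c * a i) *
          u ⟨2*n - 1 - (i : ℕ), by have := i.isLt; omega⟩
        = c * ∑ i : Fin (2*n), (if (i : ℕ) < n then 1 else -1) * a i *
          u ⟨2*n - 1 - (i : ℕ), by have := i.isLt; omega⟩ := by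
          rw [Finset.mul_sum]; congr 1; funext i; ring
      _ = 0 := by rw [ha', mul_zero]

/-- The points of the Bott–Samelson type resolution `SpR_{2n}`:
collections `(V_{i,j})` for `1 ≤ i ≤ j`, `i+j ≤ 2n`. -/
structure IsSpR (n : ℕ) (V : ℕ → ℕ → Submodule ℂ (Wsp n)) : Prop where
  dim : ∀ i j, 1 ≤ i → i ≤ j → i + j ≤ 2*n → Module.finrank ℂ (V i j) = i
  sub : ∀ i j, 1 ≤ i → i ≤ j → i + j ≤ 2*n → V i j ≤ WIJ n i j
  mono : ∀ i j, 1 ≤ i → i + 1 ≤ j → (i + 1) + j ≤ 2*n → V i j ≤ V (i+1) j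
  proj : ∀ i j, 1 ≤ i → i ≤ j → i + (j+1) ≤ 2*n →
    Submodule.map (prj n (j+1)) (V i j) ≤ V i (j+1)
  isot : ∀ i, 1 ≤ i → i ≤ n → IsIsotropic n (V i (2*n - i))

/-- A point of `SpR_{2n}` lies in the divisor `Z_{i,j}` if
`V_{i,j} = V_{i-1,j+1} + ℂ w_{j+1}` (with `V_0 = 0`). -/
def InZ (n : ℕ) (V : ℕ → ℕ → Submodule ℂ (Wsp n)) (i j : ℕ) : Prop :=
  V i j = (if i = 1 then ⊥ else V (i-1) (j+1)) ⊔ Submodule.span ℂ {wvec n (j+1)}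

open Submodule

lemma wvec_eq_single (n k : ℕ) (hk1 : 1 ≤ k) (hk2 : k ≤ 2*n) :
    wvec n k = Pi.single (⟨k-1, by omega⟩ : Fin (2*n)) (1:ℂ) := by
  funext j
  simp only [wvec, Pi.single_apply, Fin.ext_iff]
  by_cases h : (j:ℕ) + 1 = k
  · rw [if_pos h, if_pos (by omega)]
  · rw [if_neg h, if_neg (by omega)]

lemma coord_zero (n : ℕ) (B : Set ℕ) (x : Wsp n)
    (hx : x ∈ span ℂ (wvec n '' B)) (i : Fin (2*n)) (hi : (i:ℕ)+1 ∉ B) : x i = 0 := by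
  have h : span ℂ (wvec n '' B) ≤ LinearMap.ker (LinearMap.proj i :
      (Wsp n) →ₗ[ℂ] ℂ) := by
    rw [Submodule.span_le]
    rintro _ ⟨k, hk, rfl⟩
    simp only [SetLike.mem_coe, LinearMap.mem_ker, LinearMap.proj_apply]
    show wvec n k i = 0
    rw [wvec, if_neg]
    intro h; exact hi (h ▸ hk)
  exact h hx

lemma mem_of_wvec_mem (n k : ℕ) (hk1 : 1 ≤ k) (hk2 : k ≤ 2*n) (B : Set ℕ)
    (h : wvec n k ∈ span ℂ (wvec n '' B)) : k ∈ B := by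
  by_contra hc
  have := coord_zero n B _ h ⟨k-1, by omega⟩ (by simpa [Nat.sub_add_cancel hk1] using hc)
  rw [wvec, if_pos (by simp; omega)] at this
  exact one_ne_zero this

lemma wspan_le_iff (n : ℕ) (A : Finset ℕ) (hA : ∀ l ∈ A, 1 ≤ l ∧ l ≤ 2*n) (B : Set ℕ) :
    span ℂ (wvec n '' (A : Set ℕ)) ≤ span ℂ (wvec n '' B) ↔ ∀ l ∈ A, l ∈ B := by
  constructor
  · intro h l hl
    exact mem_of_wvec_mem n l (hA l hl).1 (hA l hl).2 B
      (h (subset_span ⟨l, hl, rfl⟩))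
  · intro h
    apply span_le.2
    rintro _ ⟨k, hk, rfl⟩
    exact subset_span ⟨k, h k hk, rfl⟩

lemma wvec_injOn (n : ℕ) {k k' : ℕ} (hk1 : 1 ≤ k) (hk2 : k ≤ 2*n)
    (h : wvec n k = wvec n k') : k = k' := by
  have := congrFun h ⟨k-1, by omega⟩
  rw [wvec, wvec, if_pos (by simp; omega)] at this
  by_contra hc
  rw [if_neg (by simp; omega)] at this
  exact one_ne_zero this

lemma linind (n : ℕ) (S : Finset ℕ) (hS : ∀ l ∈ S, 1 ≤ l ∧ l ≤ 2*n) :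
    LinearIndependent ℂ ((↑) : (wvec n '' (S : Set ℕ)) → Wsp n) := by
  have h1 : (wvec n '' (S : Set ℕ)) ⊆ Set.range (Pi.basisFun ℂ (Fin (2*n))) := by
    rintro _ ⟨k, hk, rfl⟩
    exact ⟨⟨k-1, by have := hS k hk; omega⟩,
      by rw [Pi.basisFun_apply]; exact (wvec_eq_single n k (hS k hk).1 (hS k hk).2).symm⟩
  exact ((Pi.basisFun ℂ (Fin (2*n))).linearIndependent.linearIndepOn_id).mono h1

lemma finrank_span_eq (n : ℕ) (S : Finset ℕ) (hS : ∀ l ∈ S, 1 ≤ l ∧ l ≤ 2*n) :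
    Module.finrank ℂ (span ℂ (wvec n '' (S : Set ℕ))) = S.card := by
  classical
  have himg : ((S.image (wvec n) : Finset (Wsp n)) : Set (Wsp n)) = wvec n '' (S : Set ℕ) := by
    simp [Finset.coe_image]
  have hli : LinearIndependent ℂ
      ((↑) : ((S.image (wvec n) : Finset (Wsp n)) : Set (Wsp n)) → Wsp n) := by
    rw [himg]; exact linind n S hS
  rw [← himg, finrank_span_finset_eq_card hli, Finset.card_image_of_injOn]
  intro k hk k' hk' h
  exact wvec_injOn n (hS k hk).1 (hS k hk).2 h

lemma prj_wvec (n m k : ℕ) : prj n m (wvec n k) = if k = m then 0 else wvec n k := by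
  by_cases hk : k = m
  · rw [if_pos hk]; subst hk
    funext j
    show (if (j:ℕ)+1 = k then 0 else wvec n k j) = 0
    by_cases hj : (j:ℕ)+1 = k
    · rw [if_pos hj]
    · rw [if_neg hj, wvec, if_neg hj]
  · rw [if_neg hk]
    funext j
    show (if (j:ℕ)+1 = m then 0 else wvec n k j) = wvec n k j
    by_cases hj : (j:ℕ)+1 = m
    · rw [if_pos hj, wvec, if_neg (by omega)]
    · rw [if_neg hj]

lemma sform_wvec_ne (n k : ℕ) (h1 : 1 ≤ k) (h2 : k ≤ 2*n) :
    sform n (wvec n k) (wvec n (2*n+1-k)) ≠ 0 := by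
  have he : sform n (wvec n k) (wvec n (2*n+1-k)) = (if k-1 < n then 1 else -1) := by
    rw [sform, Fintype.sum_eq_single (⟨k-1, by omega⟩ : Fin (2*n))]
    · have hval : ((⟨k-1, by omega⟩ : Fin (2*n)) : ℕ) = k - 1 := rfl
      have c1 : ((⟨k-1, by omega⟩ : Fin (2*n)) : ℕ) + 1 = k := by rw [hval]; omega
      have c2 : (2*n - 1 - ((⟨k-1, by omega⟩ : Fin (2*n)) : ℕ)) + 1 = 2*n+1-k := by
        rw [hval]; omega
      simp only [wvec]
      rw [if_pos c1, if_pos c2, mul_one, mul_one]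
    · intro i hi
      have hne : (i:ℕ)+1 ≠ k := fun h =>
        hi (Fin.ext (show (i:ℕ) = k - 1 by omega))
      simp only [wvec]
      rw [if_neg hne, mul_zero, zero_mul]
  rw [he]
  split_ifs <;> norm_num

lemma isotropic_of (n : ℕ) (S : Finset ℕ)
    (h : ∀ k ∈ S, (2*n+1-k) ∉ S) (hS : ∀ l ∈ S, 1 ≤ l ∧ l ≤ 2*n) :
    IsIsotropic n (span ℂ (wvec n '' (S : Set ℕ))) := by
  intro u hu v hv
  rw [sform]
  apply Finset.sum_eq_zero
  intro i _
  by_cases hk : (i:ℕ)+1 ∈ S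
  · have key : (2*n - 1 - (i:ℕ)) + 1 ∉ (S : Set ℕ) := by
      have h2 := h _ hk
      have h3 : 2*n - 1 - (i:ℕ) + 1 = 2*n + 1 - ((i:ℕ)+1) := by
        have := i.isLt; omega
      rw [h3]; exact h2
    rw [coord_zero n _ v hv ⟨2*n - 1 - (i:ℕ), by have := i.isLt; omega⟩ key, mul_zero]
  · rw [coord_zero n _ u hu i hk, mul_zero, zero_mul]

theorem statement9 (n : ℕ) (hn : 1 ≤ n) (S : ℕ → ℕ → Finset ℕ)
    (hS : ∀ i j, 1 ≤ i → i ≤ j → i + j ≤ 2*n → ∀ l ∈ S i j, 1 ≤ l ∧ l ≤ 2*n) :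
    IsSpR n (fun i j => Submodule.span ℂ (wvec n '' (S i j : Set ℕ))) ↔
      ((∀ i j, 1 ≤ i → i ≤ j → i + j ≤ 2*n →
          (∀ l ∈ S i j, (1 ≤ l ∧ l ≤ i) ∨ (j + 1 ≤ l ∧ l ≤ 2*n)) ∧ (S i j).card = i) ∧
       (∀ i j, 1 ≤ i → i + 1 ≤ j → (i + 1) + j ≤ 2*n → S i j ⊆ S (i+1) j) ∧
       (∀ i j, 1 ≤ i → i ≤ j → i + (j+1) ≤ 2*n → S i j ⊆ S i (j+1) ∪ {j+1}) ∧
       (∀ i, 1 ≤ i → i ≤ n → ∀ k ∈ S i (2*n - i), (2*n + 1 - k) ∉ S i (2*n - i))) := by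
  constructor
  · rintro ⟨hdim, hsub, hmono, hproj, hisot⟩
    refine ⟨?_, ?_, ?_, ?_⟩
    · intro i j h1 h2 h3
      refine ⟨fun l hl => ?_, ?_⟩
      · exact mem_of_wvec_mem n l (hS i j h1 h2 h3 l hl).1 (hS i j h1 h2 h3 l hl).2 _
          (hsub i j h1 h2 h3 (subset_span ⟨l, hl, rfl⟩))
      · have e1 := hdim i j h1 h2 h3
        have e2 := finrank_span_eq n _ (hS i j h1 h2 h3)
        omega
    · intro i j h1 h2 h3 l hl
      have hb := hS i j h1 (by omega) (by omega)
      exact Finset.mem_coe.1 (mem_of_wvec_mem n l (hb l hl).1 (hb l hl).2 _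
        (hmono i j h1 h2 h3 (subset_span ⟨l, hl, rfl⟩)))
    · intro i j h1 h2 h3 l hl
      by_cases hlj : l = j+1
      · exact Finset.mem_union_right _ (by simp [hlj])
      · have hb := hS i j h1 h2 (by omega)
        have hx : wvec n l ∈ Submodule.map (prj n (j+1))
            (span ℂ (wvec n '' ((S i j : Set ℕ)))) := by
          refine ⟨wvec n l, subset_span ⟨l, hl, rfl⟩, ?_⟩
          rw [prj_wvec, if_neg hlj]
        exact Finset.mem_union_left _ (Finset.mem_coe.1
          (mem_of_wvec_mem n l (hb l hl).1 (hb l hl).2 _ (hproj i j h1 h2 h3 hx)))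
    · intro i hi1 hi2 k hk hk'
      have hb := hS i (2*n-i) hi1 (by omega) (by omega)
      have hiso := hisot i hi1 hi2 (wvec n k) (subset_span ⟨k, hk, rfl⟩)
        (wvec n (2*n+1-k)) (subset_span ⟨2*n+1-k, hk', rfl⟩)
      exact sform_wvec_ne n k (hb k hk).1 (hb k hk).2 hiso
  · rintro ⟨ha, hb, hc, hd⟩
    constructor
    · intro i j h1 h2 h3
      rw [finrank_span_eq n _ (hS i j h1 h2 h3)]
      exact (ha i j h1 h2 h3).2
    · intro i j h1 h2 h3
      rw [WIJ]
      exact (wspan_le_iff n _ (hS i j h1 h2 h3) _).2 (ha i j h1 h2 h3).1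
    · intro i j h1 h2 h3
      apply (wspan_le_iff n _ (hS i j h1 (by omega) (by omega)) _).2
      intro l hl
      exact Finset.mem_coe.2 (hb i j h1 h2 h3 hl)
    · intro i j h1 h2 h3
      rw [Submodule.map_span]
      apply span_le.2
      rintro _ ⟨_, ⟨l, hl, rfl⟩, rfl⟩
      rw [SetLike.mem_coe, prj_wvec]
      by_cases hlj : l = j+1
      · rw [if_pos hlj]; exact zero_mem _
      · rw [if_neg hlj]
        have hm := hc i j h1 h2 h3 hl
        rw [Finset.mem_union, Finset.mem_singleton] at hm
        rcases hm with h | h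
        · exact subset_span ⟨l, h, rfl⟩
        · exact absurd h hlj
    · intro i hi1 hi2
      exact isotropic_of n _ (hd i hi1 hi2) (hS i (2*n-i) hi1 (by omega) (by omega))
end
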